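/- Fix ω > 0 and z₀ ∈ ℂ, and let G(z) := (ω/(4π)) · ((conj z − conj z₀)/(z − z₀)) · (1 + z₀·conj z)² / ((1+|z|²)(1+|z₀|²)) for z ≠ z₀. Then for every z ∈ ℂ with z ≠ z₀, P(z)² · ∂̄( w ↦ P(w)² · ∂̄( v ↦ P(v)^{-2} G(v) )(w) )(z) = −(ω/(8π)) · (1 + 3 · ⟨n(z), n(z₀)⟩), where ⟨·,·⟩ is the Euclidean inner product on ℝ³. (This says the paper's gravitational memory solution (4.10) satisfies the Green's function equation P²∂̄(P²∂̄(P⁻²Δ)) = (ω/2)·δ_{S²}|_{ℓ≥2} away from the source point: away from z₀ it equals minus ω/2 times the kernel (1/4π)(1+3cos γ) of the projection onto ℓ = 0,1 spherical harmonics.) -/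

import Mathlib

open scoped BigOperators
open ComplexConjugate

set_option maxHeartbeats 4000000

noncomputable section

/-- The Wirtinger derivative `∂̄f(z) = (1/2)(∂f/∂x + i ∂f/∂y)`. -/
def dbar (f : ℂ → ℂ) (z : ℂ) : ℂ :=
  (1 / 2) * (deriv (fun t : ℝ => f (z + (t : ℂ))) 0
    + Complex.I * deriv (fun t : ℝ => f (z + (t : ℂ) * Complex.I)) 0)

/-- The conformal factor `P(z) = (1 + |z|²)/√2` of the round sphere metric in
stereographic coordinates. -/
def Pconf (z : ℂ) : ℝ := (1 + ‖z‖ ^ 2) / Real.sqrt 2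

/-- The paper's gravitational memory Green's function (4.10):
`G(z) = (ω/4π) ((z̄ − z̄₀)/(z − z₀)) (1 + z₀ z̄)² / ((1+|z|²)(1+|z₀|²))`. -/
def memG (ω : ℝ) (z₀ z : ℂ) : ℂ :=
  ((ω / (4 * Real.pi) : ℝ) : ℂ) *
    (((starRingEnd ℂ) z - (starRingEnd ℂ) z₀) / (z - z₀)) *
    (1 + z₀ * (starRingEnd ℂ) z) ^ 2 /
    (((1 + ‖z‖ ^ 2 : ℝ) : ℂ) * ((1 + ‖z₀‖ ^ 2 : ℝ) : ℂ))

/-- The unit direction vector `n(z) = (z + z̄, −i(z − z̄), 1 − |z|²)/(1 + |z|²) ∈ ℝ³`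
of the stereographic coordinate `z`. -/
def nvec (z : ℂ) : Fin 3 → ℝ :=
  ![(2 * z.re) / (1 + ‖z‖ ^ 2),
    (2 * z.im) / (1 + ‖z‖ ^ 2),
    (1 - ‖z‖ ^ 2) / (1 + ‖z‖ ^ 2)]

/-- Euclidean inner product on `ℝ³`. -/
def dot3 (u v : Fin 3 → ℝ) : ℝ := ∑ i, u i * v i

lemma one_add_mul_conj_ne_zero (v : ℂ) : (1:ℂ) + v * conj v ≠ 0 := by
  rw [Complex.mul_conj, ← Complex.ofReal_one, ← Complex.ofReal_add, Ne, Complex.ofReal_eq_zero]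
  nlinarith [Complex.normSq_nonneg v]

lemma hasDerivAt_quad (a b g : ℂ) : HasDerivAt (fun s : ℂ => a + b*s + g*(s*s)) b 0 := by
  have h := ((hasDerivAt_const (0:ℂ) a).add ((hasDerivAt_id (0:ℂ)).const_mul b)).add
    (((hasDerivAt_id (0:ℂ)).mul (hasDerivAt_id (0:ℂ))).const_mul g)
  exact h.congr_deriv (by simp)

lemma hasDerivAt_shape (K a0 a1 a2 b0 b1 b2 p0 p1 p2 q0 q1 q2 : ℂ) (m n : ℕ)
    (hp : p0 ≠ 0) (hq : q0 ≠ 0) :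
    HasDerivAt (fun s : ℂ => K * (a0+a1*s+a2*(s*s)) * (b0+b1*s+b2*(s*s))^m /
      ((p0+p1*s+p2*(s*s)) * (q0+q1*s+q2*(s*s))^n))
      (((K*a1*b0^m + K*a0*((m:ℂ)*b0^(m-1)*b1)) * (p0*q0^n)
        - K*a0*b0^m * (p1*q0^n + p0*((n:ℂ)*q0^(n-1)*q1))) / (p0*q0^n)^2) 0 := by
  have hA := hasDerivAt_quad a0 a1 a2
  have hB := (hasDerivAt_quad b0 b1 b2).pow m
  have hP := hasDerivAt_quad p0 p1 p2
  have hQ := (hasDerivAt_quad q0 q1 q2).pow n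
  have hden : (p0+p1*0+p2*(0*0)) * (q0+q1*0+q2*(0*0))^n ≠ 0 := by
    simpa using mul_ne_zero hp (pow_ne_zero n hq)
  have h := ((hA.const_mul K).mul hB).div (hP.mul hQ) hden
  exact h.congr_deriv (by simp)

lemma deriv_shape_real (F : ℝ → ℂ) (K a0 a1 a2 b0 b1 b2 p0 p1 p2 q0 q1 q2 : ℂ) (m n : ℕ)
    (hp : p0 ≠ 0) (hq : q0 ≠ 0)
    (hF : ∀ t : ℝ, F t = K * (a0+a1*(t:ℂ)+a2*((t:ℂ)*(t:ℂ))) * (b0+b1*(t:ℂ)+b2*((t:ℂ)*(t:ℂ)))^m /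
      ((p0+p1*(t:ℂ)+p2*((t:ℂ)*(t:ℂ))) * (q0+q1*(t:ℂ)+q2*((t:ℂ)*(t:ℂ)))^n)) :
    deriv F 0 = ((K*a1*b0^m + K*a0*((m:ℂ)*b0^(m-1)*b1)) * (p0*q0^n)
        - K*a0*b0^m * (p1*q0^n + p0*((n:ℂ)*q0^(n-1)*q1))) / (p0*q0^n)^2 := by
  have h0 : HasDerivAt (fun s : ℂ => K * (a0+a1*s+a2*(s*s)) * (b0+b1*s+b2*(s*s))^m /
      ((p0+p1*s+p2*(s*s)) * (q0+q1*s+q2*(s*s))^n))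
      (((K*a1*b0^m + K*a0*((m:ℂ)*b0^(m-1)*b1)) * (p0*q0^n)
        - K*a0*b0^m * (p1*q0^n + p0*((n:ℂ)*q0^(n-1)*q1))) / (p0*q0^n)^2) (((0:ℝ):ℂ)) := by
    rw [Complex.ofReal_zero]; exact hasDerivAt_shape K a0 a1 a2 b0 b1 b2 p0 p1 p2 q0 q1 q2 m n hp hq
  have h := h0.comp_ofReal
  rw [funext hF]
  exact h.deriv

lemma dbar_congr {f g : ℂ → ℂ} {z : ℂ} (h : ∀ᶠ v in nhds z, f v = g v) : dbar f z = dbar g z := by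
  unfold dbar
  have t1 : Filter.Tendsto (fun t : ℝ => z + (t:ℂ)) (nhds 0) (nhds z) := by
    have hc : Continuous fun t : ℝ => z + (t:ℂ) := by continuity
    simpa using hc.tendsto 0
  have t2 : Filter.Tendsto (fun t : ℝ => z + (t:ℂ)*Complex.I) (nhds 0) (nhds z) := by
    have hc : Continuous fun t : ℝ => z + (t:ℂ)*Complex.I := by continuity
    simpa using hc.tendsto 0
  have e1 : (fun t:ℝ => f (z+(t:ℂ))) =ᶠ[nhds 0] (fun t:ℝ => g (z+(t:ℂ))) := t1.eventually h
  have e2 : (fun t:ℝ => f (z+(t:ℂ)*Complex.I)) =ᶠ[nhds 0] (fun t:ℝ => g (z+(t:ℂ)*Complex.I)) :=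
    t2.eventually h
  rw [e1.deriv_eq, e2.deriv_eq]

lemma shape_deriv_I (K a0 a1 b0 b1 p0 p1 q0 q1 : ℂ) (m n : ℕ) :
    Complex.I * (((K*(Complex.I*a1)*b0^m + K*a0*((m:ℂ)*b0^(m-1)*(Complex.I*b1))) * (p0*q0^n)
        - K*a0*b0^m * ((Complex.I*p1)*q0^n + p0*((n:ℂ)*q0^(n-1)*(Complex.I*q1)))) / (p0*q0^n)^2)
    = -(((K*a1*b0^m + K*a0*((m:ℂ)*b0^(m-1)*b1)) * (p0*q0^n)
        - K*a0*b0^m * (p1*q0^n + p0*((n:ℂ)*q0^(n-1)*q1))) / (p0*q0^n)^2) := by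
  have h : ∀ X:ℂ, Complex.I * (Complex.I * X) = -X := fun X => by
    rw [← mul_assoc, Complex.I_mul_I, neg_one_mul]
  calc Complex.I * (((K*(Complex.I*a1)*b0^m + K*a0*((m:ℂ)*b0^(m-1)*(Complex.I*b1))) * (p0*q0^n)
        - K*a0*b0^m * ((Complex.I*p1)*q0^n + p0*((n:ℂ)*q0^(n-1)*(Complex.I*q1)))) / (p0*q0^n)^2)
      = Complex.I * (Complex.I * ((((K*a1*b0^m + K*a0*((m:ℂ)*b0^(m-1)*b1)) * (p0*q0^n)
        - K*a0*b0^m * (p1*q0^n + p0*((n:ℂ)*q0^(n-1)*q1))) / (p0*q0^n)^2))) := by ring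
    _ = _ := h _

lemma abs_sq_cast (v : ℂ) : ((‖v‖ ^ 2 : ℝ) : ℂ) = v * conj v := by
  rw [Complex.sq_norm]
  exact_mod_cast (Complex.mul_conj v).symm

lemma abs_sq_cast' (v : ℂ) : ((‖v‖ : ℝ) : ℂ)^2 = v * conj v := by
  rw [← Complex.ofReal_pow]; exact abs_sq_cast v

lemma Pconf_sq (v : ℂ) : (((Pconf v : ℝ)) : ℂ)^2 = (1 + v * conj v)^2 / 2 := by
  have h2 : ((Real.sqrt 2 : ℝ) : ℂ)^2 = 2 := by
    rw [← Complex.ofReal_pow, Real.sq_sqrt (by norm_num : (0:ℝ) ≤ 2)]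
    norm_num
  have : ((Pconf v : ℝ) : ℂ) = (1 + v * conj v) / ((Real.sqrt 2 : ℝ) : ℂ) := by
    unfold Pconf
    push_cast
    rw [abs_sq_cast']
  rw [this, div_pow, h2]

lemma dbar_inner (K z₀ c w : ℂ) (hw : w ≠ z₀) :
    dbar (fun v => K * (conj v - c) * (1 + z₀ * conj v)^2 / ((v - z₀) * (1 + v * conj v)^3)) w
    = K * (1 + z₀ * conj w) *
        (1 - 2*(w*conj w) + 3*(z₀*conj w) + 3*(c*w) - 2*(z₀*c) + z₀*c*(w*conj w))
        / ((w - z₀) * (1 + w*conj w)^4) := by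
  have hp : w - z₀ ≠ 0 := sub_ne_zero.mpr hw
  have hq : (1:ℂ) + w*conj w ≠ 0 := one_add_mul_conj_ne_zero w
  have d1 := deriv_shape_real
      (fun t : ℝ => K * (conj (w+(t:ℂ)) - c) * (1 + z₀ * conj (w+(t:ℂ)))^2 /
        ((w+(t:ℂ) - z₀) * (1 + (w+(t:ℂ)) * conj (w+(t:ℂ)))^3))
      K (conj w - c) 1 0 (1+z₀*conj w) z₀ 0 (w-z₀) 1 0 (1+w*conj w) (w+conj w) 1 2 3 hp hq
      (fun t => by simp only [map_add, Complex.conj_ofReal]; ring)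
  have d2 := deriv_shape_real
      (fun t : ℝ => K * (conj (w+(t:ℂ)*Complex.I) - c) * (1 + z₀ * conj (w+(t:ℂ)*Complex.I))^2 /
        ((w+(t:ℂ)*Complex.I - z₀) * (1 + (w+(t:ℂ)*Complex.I) * conj (w+(t:ℂ)*Complex.I))^3))
      K (conj w - c) (Complex.I*(-1)) 0 (1+z₀*conj w) (Complex.I*(-z₀)) 0
      (w-z₀) (Complex.I*1) 0 (1+w*conj w) (Complex.I*(conj w - w)) (-(Complex.I*Complex.I)) 2 3 hp hq
      (fun t => by simp only [map_add, map_mul, Complex.conj_ofReal, Complex.conj_I]; ring)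
  unfold dbar
  rw [d1, d2, shape_deriv_I K (conj w - c) (-1) (1+z₀*conj w) (-z₀) (w-z₀) 1
    (1+w*conj w) (conj w - w) 2 3]
  push_cast
  field_simp
  ring

lemma dbar_mid (K z₀ c z : ℂ) (hz : z ≠ z₀) :
    dbar (fun v => K * (1 + z₀ * conj v) *
        (1 - 2*(v*conj v) + 3*(z₀*conj v) + 3*(c*v) - 2*(z₀*c) + z₀*c*(v*conj v))
        / (2*(v - z₀) * (1 + v*conj v)^2)) z
    = K * ((z₀*(1 - 2*(z*conj z) + 3*(z₀*conj z) + 3*(c*z) - 2*(z₀*c) + z₀*c*(z*conj z))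
          + (1+z₀*conj z)*(-2*z+3*z₀+z₀*c*z)) * (1+z*conj z)
          - 2*z*((1+z₀*conj z)*(1 - 2*(z*conj z) + 3*(z₀*conj z) + 3*(c*z) - 2*(z₀*c)
            + z₀*c*(z*conj z))))
        / (2*(z-z₀)*(1+z*conj z)^3) := by
  have hp : 2*(z - z₀) ≠ 0 := mul_ne_zero two_ne_zero (sub_ne_zero.mpr hz)
  have hq : (1:ℂ) + z*conj z ≠ 0 := one_add_mul_conj_ne_zero z
  have hz' : z - z₀ ≠ 0 := sub_ne_zero.mpr hz
  have d1 := deriv_shape_real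
      (fun t : ℝ => K * (1 + z₀ * conj (z+(t:ℂ))) *
        (1 - 2*((z+(t:ℂ))*conj (z+(t:ℂ))) + 3*(z₀*conj (z+(t:ℂ))) + 3*(c*(z+(t:ℂ)))
          - 2*(z₀*c) + z₀*c*((z+(t:ℂ))*conj (z+(t:ℂ)))) /
        (2*(z+(t:ℂ) - z₀) * (1 + (z+(t:ℂ))*conj (z+(t:ℂ)))^2))
      K (1+z₀*conj z) z₀ 0
      (1 - 2*(z*conj z) + 3*(z₀*conj z) + 3*(c*z) - 2*(z₀*c) + z₀*c*(z*conj z))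
      (-2*(z+conj z)+3*z₀+3*c+z₀*c*(z+conj z)) (-2+z₀*c)
      (2*(z-z₀)) 2 0 (1+z*conj z) (z+conj z) 1 1 2 hp hq
      (fun t => by simp only [map_add, Complex.conj_ofReal]; ring)
  have d2 := deriv_shape_real
      (fun t : ℝ => K * (1 + z₀ * conj (z+(t:ℂ)*Complex.I)) *
        (1 - 2*((z+(t:ℂ)*Complex.I)*conj (z+(t:ℂ)*Complex.I)) + 3*(z₀*conj (z+(t:ℂ)*Complex.I))
          + 3*(c*(z+(t:ℂ)*Complex.I)) - 2*(z₀*c)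
          + z₀*c*((z+(t:ℂ)*Complex.I)*conj (z+(t:ℂ)*Complex.I))) /
        (2*(z+(t:ℂ)*Complex.I - z₀) * (1 + (z+(t:ℂ)*Complex.I)*conj (z+(t:ℂ)*Complex.I))^2))
      K (1+z₀*conj z) (Complex.I*(-z₀)) 0
      (1 - 2*(z*conj z) + 3*(z₀*conj z) + 3*(c*z) - 2*(z₀*c) + z₀*c*(z*conj z))
      (Complex.I*(-2*(conj z - z)-3*z₀+3*c+z₀*c*(conj z - z))) ((-2+z₀*c)*(-(Complex.I*Complex.I)))
      (2*(z-z₀)) (Complex.I*2) 0 (1+z*conj z) (Complex.I*(conj z - z)) (-(Complex.I*Complex.I)) 1 2 hp hq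
      (fun t => by simp only [map_add, map_mul, Complex.conj_ofReal, Complex.conj_I]; ring)
  unfold dbar
  rw [d1, d2, shape_deriv_I K (1+z₀*conj z) (-z₀)
    (1 - 2*(z*conj z) + 3*(z₀*conj z) + 3*(c*z) - 2*(z₀*c) + z₀*c*(z*conj z))
    (-2*(conj z - z)-3*z₀+3*c+z₀*c*(conj z - z)) (2*(z-z₀)) 2 (1+z*conj z) (conj z - z) 1 2]
  push_cast
  field_simp
  ring

lemma inner_eq (ω : ℝ) (z₀ v : ℂ) (hv : v ≠ z₀) :
    ((((Pconf v : ℝ)) : ℂ)^2)⁻¹ * memG ω z₀ v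
    = (((ω / (2*Real.pi) : ℝ) : ℂ) / (1 + z₀ * conj z₀)) * (conj v - conj z₀) *
        (1 + z₀ * conj v)^2 / ((v - z₀) * (1 + v * conj v)^3) := by
  have hv' : v - z₀ ≠ 0 := sub_ne_zero.mpr hv
  have hq : (1:ℂ) + v*conj v ≠ 0 := one_add_mul_conj_ne_zero v
  have hq0 : (1:ℂ) + z₀*conj z₀ ≠ 0 := one_add_mul_conj_ne_zero z₀
  have hpi : ((Real.pi : ℝ) : ℂ) ≠ 0 := Complex.ofReal_ne_zero.mpr Real.pi_ne_zero
  rw [Pconf_sq]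
  unfold memG
  rw [show ((1 + ‖v‖ ^ 2 : ℝ) : ℂ) = 1 + v * conj v by push_cast [abs_sq_cast']; ring,
      show ((1 + ‖z₀‖ ^ 2 : ℝ) : ℂ) = 1 + z₀ * conj z₀ by push_cast [abs_sq_cast']; ring]
  push_cast
  simp only [div_eq_mul_inv, mul_inv, inv_inv, ← inv_pow]
  ring

lemma dot3_cast (z w : ℂ) :
    ((dot3 (nvec z) (nvec w) : ℝ) : ℂ)
    = (2*(z*conj w + conj z*w) + (1 - z*conj z)*(1 - w*conj w)) /
        ((1+z*conj z)*(1+w*conj w)) := by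
  have hre : z*conj w + conj z*w = ((2*(z.re*w.re + z.im*w.im) : ℝ) : ℂ) := by
    have e : conj z * w = conj (z * conj w) := by rw [map_mul, Complex.conj_conj]
    rw [e, Complex.add_conj, Complex.mul_re, Complex.conj_re, Complex.conj_im]
    push_cast; ring
  simp only [dot3, nvec, Fin.sum_univ_three, Matrix.cons_val_zero, Matrix.cons_val_one,
    Matrix.head_cons, Matrix.cons_val_two, Matrix.tail_cons]
  push_cast
  rw [hre, ← abs_sq_cast' z, ← abs_sq_cast' w]
  push_cast
  simp only [div_eq_mul_inv, mul_inv, inv_inv, ← inv_pow]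
  ring


/-- The gravitational memory solution (4.10) satisfies the Green's function
equation `P²∂̄(P²∂̄(P⁻²Δ)) = (ω/2) δ_{S²}|_{ℓ≥2}` away from the source point:
for `z ≠ z₀`,
`P(z)² ∂̄(w ↦ P(w)² ∂̄(v ↦ P(v)⁻² G(v))(w))(z) = −(ω/8π)(1 + 3⟨n(z), n(z₀)⟩)`. -/
theorem memG_greens_equation_away_from_source
    (ω : ℝ) (hω : 0 < ω) (z₀ : ℂ) (z : ℂ) (hz : z ≠ z₀) :
    ((Pconf z : ℝ) : ℂ) ^ 2 *
      dbar (fun w => ((Pconf w : ℝ) : ℂ) ^ 2 *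
        dbar (fun v => (((Pconf v : ℝ) : ℂ) ^ 2)⁻¹ * memG ω z₀ v) w) z
    = -((ω / (8 * Real.pi) : ℝ) : ℂ) *
        (1 + 3 * ((dot3 (nvec z) (nvec z₀) : ℝ) : ℂ)) := by
  have hq : (1:ℂ) + z*conj z ≠ 0 := one_add_mul_conj_ne_zero z
  have hq0 : (1:ℂ) + z₀*conj z₀ ≠ 0 := one_add_mul_conj_ne_zero z₀
  have hz' : z - z₀ ≠ 0 := sub_ne_zero.mpr hz
  have hpi : ((Real.pi:ℝ):ℂ) ≠ 0 := Complex.ofReal_ne_zero.mpr Real.pi_ne_zero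
  have hstep1 : dbar (fun w => ((Pconf w : ℝ) : ℂ) ^ 2 *
        dbar (fun v => (((Pconf v : ℝ) : ℂ) ^ 2)⁻¹ * memG ω z₀ v) w) z
      = dbar (fun v => (((ω / (2*Real.pi) : ℝ) : ℂ) / (1 + z₀ * conj z₀)) * (1 + z₀ * conj v) *
        (1 - 2*(v*conj v) + 3*(z₀*conj v) + 3*(conj z₀*v) - 2*(z₀*conj z₀)
          + z₀*conj z₀*(v*conj v))
        / (2*(v - z₀) * (1 + v*conj v)^2)) z := by
    apply dbar_congr
    filter_upwards [eventually_ne_nhds hz] with w hw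
    have hw' : w - z₀ ≠ 0 := sub_ne_zero.mpr hw
    have hqw : (1:ℂ) + w*conj w ≠ 0 := one_add_mul_conj_ne_zero w
    have hin : dbar (fun v => (((Pconf v : ℝ) : ℂ) ^ 2)⁻¹ * memG ω z₀ v) w
        = dbar (fun v => (((ω / (2*Real.pi) : ℝ) : ℂ) / (1 + z₀ * conj z₀)) *
            (conj v - conj z₀) * (1 + z₀ * conj v)^2 /
            ((v - z₀) * (1 + v * conj v)^3)) w := by
      apply dbar_congr
      filter_upwards [eventually_ne_nhds hw] with v hv
      exact inner_eq ω z₀ v hv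
    rw [hin, dbar_inner _ z₀ (conj z₀) w hw, Pconf_sq]
    rw [div_mul_div_comm, div_eq_div_iff
      (mul_ne_zero two_ne_zero (mul_ne_zero hw' (pow_ne_zero 4 hqw)))
      (mul_ne_zero (mul_ne_zero two_ne_zero hw') (pow_ne_zero 2 hqw))]
    ring
  rw [hstep1, dbar_mid _ z₀ (conj z₀) z hz, Pconf_sq, dot3_cast, div_mul_div_comm]
  have hX4 : (4:ℂ)*(z - z₀)*(1 + z*conj z) ≠ 0 :=
    mul_ne_zero (mul_ne_zero (by norm_num : (4:ℂ) ≠ 0) hz') hq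
  have hD1 : (2:ℂ)*(2*(z - z₀)*(1 + z*conj z)^3) ≠ 0 :=
    mul_ne_zero two_ne_zero (mul_ne_zero (mul_ne_zero two_ne_zero hz') (pow_ne_zero 3 hq))
  have hcancel : ∀ N : ℂ, (1 + z*conj z)^2 * N / (2*(2*(z - z₀)*(1 + z*conj z)^3))
      = N / (4*(z - z₀)*(1 + z*conj z)) := by
    intro N
    rw [div_eq_div_iff hD1 hX4]
    ring
  rw [hcancel]
  rw [show ((z₀*(1 - 2*(z*conj z) + 3*(z₀*conj z) + 3*(conj z₀*z) - 2*(z₀*conj z₀)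
          + z₀*conj z₀*(z*conj z))
          + (1+z₀*conj z)*(-2*z+3*z₀+z₀*conj z₀*z)) * (1+z*conj z)
          - 2*z*((1+z₀*conj z)*(1 - 2*(z*conj z) + 3*(z₀*conj z) + 3*(conj z₀*z) - 2*(z₀*conj z₀)
            + z₀*conj z₀*(z*conj z)))) =
      (z - z₀) * (-(4 - 2*(z*conj z) - 2*(z₀*conj z₀) + 4*(z*conj z)*(z₀*conj z₀)
        + 6*(z*conj z₀) + 6*(conj z*z₀))) from by ring]
  have hcancel2 : ∀ M : ℂ, (((ω / (2*Real.pi) : ℝ) : ℂ) / (1 + z₀ * conj z₀)) * ((z - z₀) * M)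
      / (4*(z - z₀)*(1 + z*conj z))
      = (((ω / (2*Real.pi) : ℝ) : ℂ) / (1 + z₀ * conj z₀)) * M / (4*(1 + z*conj z)) := by
    intro M
    rw [div_eq_div_iff hX4 (mul_ne_zero (by norm_num : (4:ℂ) ≠ 0) hq)]
    ring
  rw [hcancel2]
  have hR : (1:ℂ) + 3 * ((2*(z*conj z₀ + conj z*z₀) + (1 - z*conj z)*(1 - z₀*conj z₀)) /
        ((1+z*conj z)*(1+z₀*conj z₀)))
      = ((1+z*conj z)*(1+z₀*conj z₀)
          + 3*(2*(z*conj z₀ + conj z*z₀) + (1 - z*conj z)*(1 - z₀*conj z₀))) /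
        ((1+z*conj z)*(1+z₀*conj z₀)) := by
    conv_rhs => rw [add_div, div_self (mul_ne_zero hq hq0), mul_div_assoc]
  rw [hR]
  push_cast
  simp only [div_eq_mul_inv, mul_inv, inv_inv, ← inv_pow]
  ring
end
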